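/- Let d ≥ 2, 0 < κ < 1, 0 < ρ' < ρ with κρ < ρ'. Let ω ∈ KT_d, T ∈ GL(d,ℤ) with Tω = λ₁ω (λ₁ the unique eigenvalue of T of modulus greater than 1), and ω̄ ∈ ℝ^d with Tᵀω̄ = λ₁ω̄ and ω̄·ω = 1. Let σ > 0 be such that every nonzero k ∈ ℤ^d with |ω·k| ≤ σ‖k‖ satisfies ‖Tᵀk‖ ≤ κ‖k‖, so that 𝒯 : X ↦ T⁻¹·(X∘T) is a bounded linear map from 𝕀_σ⁺(ω)𝒜_d(ρ') to 𝒜'_d(ρ). Let 𝒰 be any analytic map from an open ball B̂ ⊂ 𝒜'_d(ρ) centred at the constant vector field ω into 𝕀_σ⁺(ω)𝒜_d(ρ') satisfying ‖𝒰(ω+f) − ω − 𝕀_σ⁺(ω)f‖_{ρ'} = O(‖f‖'_ρ²) for ω+f ∈ B̂. Then there is an open ball B ⊆ B̂ centred at ω such that for every X ∈ B the complex number ω̄·𝔼(𝒯(𝒰(X))) is nonzero, and the renormalisation operator ℛ(X) = 𝒯(𝒰(X)) / (ω̄·𝔼(𝒯(𝒰(X)))) is a well-defined analytic map from B to 𝒜'_d(ρ).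 -/

import Mathlib

open scoped BigOperators ENNReal Classical
open Complex

noncomputable section

namespace Renorm

/-- ℓ¹ norm of an integer frequency vector. -/
def nZ {d : ℕ} (k : Fin d → ℤ) : ℝ := ∑ i, |(k i : ℝ)|

/-- `ℂ^m` with the ℓ¹ norm. -/
abbrev V (m : ℕ) : Type := PiLp 1 (fun _ : Fin m => ℂ)

/-- The Banach space underlying `𝒜_d(r)` (and `𝒜'_d(r)`):  an element stores, at
index `k ∈ ℤ^d`, the Fourier coefficient multiplied by the corresponding weight,
so that the `lp`-norm coincides with the norm `‖·‖_r` (resp. `‖·‖'_r`). -/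
abbrev AA (d m : ℕ) : Type := lp (fun _ : (Fin d → ℤ) => V m) 1

/-- weight of the norm of `𝒜_d(r)` -/
def w {d : ℕ} (r : ℝ) (k : Fin d → ℤ) : ℝ := Real.exp (r * nZ k)

/-- weight of the norm of `𝒜'_d(r)` -/
def w' {d : ℕ} (r : ℝ) (k : Fin d → ℤ) : ℝ := (1 + 2 * Real.pi * nZ k) * Real.exp (r * nZ k)

/-- Fourier coefficient of `a` regarded as an element of `𝒜_d(r)`. -/
def coeffA {d m : ℕ} (r : ℝ) (a : AA d m) (k : Fin d → ℤ) : V m := (w r k)⁻¹ • a k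

/-- Fourier coefficient of `a` regarded as an element of `𝒜'_d(r)`. -/
def coeffA' {d m : ℕ} (r : ℝ) (a : AA d m) (k : Fin d → ℤ) : V m := (w' r k)⁻¹ • a k

/-- `k · θ` -/
def kdot {d : ℕ} (k : Fin d → ℤ) (θ : V d) : ℂ := ∑ i, (k i : ℂ) * θ i

/-- the Fourier character `e^{2πi k·θ}` -/
def e2 {d : ℕ} (k : Fin d → ℤ) (θ : V d) : ℂ := Complex.exp (2 * Real.pi * Complex.I * kdot k θ)

/-- the function represented by `a`, regarded as an element of `𝒜_d(r)` -/
def funA {d m : ℕ} (r : ℝ) (a : AA d m) (θ : V d) : V m := ∑' k, e2 k θ • coeffA r a k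

/-- the function represented by `a`, regarded as an element of `𝒜'_d(r)` -/
def funA' {d m : ℕ} (r : ℝ) (a : AA d m) (θ : V d) : V m := ∑' k, e2 k θ • coeffA' r a k

/-- the complex domain `D(r)` -/
def Dom (d : ℕ) (r : ℝ) : Set (V d) := {θ | (∑ i, |(θ i).im|) < r / (2 * Real.pi)}

/-- the norm `‖·‖_s` of a family of Fourier coefficients -/
def normA {d m : ℕ} (s : ℝ) (c : (Fin d → ℤ) → V m) : ℝ := ∑' k, ‖c k‖ * w s k

/-- the norm `‖·‖'_s` of a family of Fourier coefficients -/
def normA' {d m : ℕ} (s : ℝ) (c : (Fin d → ℤ) → V m) : ℝ := ∑' k, ‖c k‖ * w' s k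

/-- the set `I_σ⁻(ω)` of far from resonance indices -/
def Iminus {d : ℕ} (σ : ℝ) (ω : V d) : Set (Fin d → ℤ) :=
  {k | σ * nZ k < ‖∑ i, ω i * (k i : ℂ)‖}

/-- the constant vector field `c` as an element of `𝒜_d(r)` / `𝒜'_d(r)`
(both weights are `1` at `k = 0`). -/
def const {d m : ℕ} (c : V m) : AA d m := lp.single 1 (0 : Fin d → ℤ) c

/-- the subspace of `𝒜_d` / `𝒜'_d` of vector fields with Fourier modes supported in `S` -/
def SubOn (d m : ℕ) (S : Set (Fin d → ℤ)) : Submodule ℂ (AA d m) where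
  carrier := {a | ∀ k ∉ S, a k = 0}
  add_mem' := by
    intro a b ha hb k hk
    rw [lp.coeFn_add, Pi.add_apply, ha k hk, hb k hk, add_zero]
  zero_mem' := by
    intro k _
    rw [lp.coeFn_zero, Pi.zero_apply]
  smul_mem' := by
    intro c a ha k hk
    rw [lp.coeFn_smul, Pi.smul_apply, ha k hk, smul_zero]

/-- real vector as a complex one -/
def toC {d : ℕ} (ω : Fin d → ℝ) : V d := WithLp.toLp 1 (fun i => (ω i : ℂ))


/-- Koch type vectors `KT_d`: `ω = c·(1, ω₂, …, ω_d)` with `c ≠ 0`, the `ωᵢ`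
real algebraic numbers and `ℚ(ω₂,…,ω_d)` of degree `d` over `ℚ`. -/
def KochType (d : ℕ) (ω : Fin d → ℝ) : Prop :=
  ∃ (c : ℝ) (ω0 : Fin d → ℝ), c ≠ 0 ∧ ω = c • ω0 ∧ (∀ h0 : 0 < d, ω0 ⟨0, h0⟩ = 1) ∧
    (∀ i, IsAlgebraic ℚ (ω0 i)) ∧
    Module.finrank ℚ (IntermediateField.adjoin ℚ (Set.range ω0) : IntermediateField ℚ ℝ) = d

section Aux

variable {d m : ℕ}

lemma trunc_memℓp (S : Set (Fin d → ℤ)) (a : AA d m) :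
    Memℓp (fun k => if k ∈ S then a k else 0) 1 := by
  apply memℓp_gen' (C := ‖a‖)
  intro s
  calc ∑ k ∈ s, ‖(if k ∈ S then a k else 0)‖ ^ (1 : ℝ≥0∞).toReal
      ≤ ∑ k ∈ s, ‖a k‖ ^ (1 : ℝ≥0∞).toReal := by
        refine Finset.sum_le_sum fun k _ => ?_
        simp only [ENNReal.toReal_one, Real.rpow_one]
        split <;> simp
    _ ≤ ‖a‖ ^ (1 : ℝ≥0∞).toReal := lp.sum_rpow_le_norm_rpow (by norm_num) a s
    _ = ‖a‖ := by simp

/-- truncation to modes in `S`, as a continuous linear map -/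
def truncL (S : Set (Fin d → ℤ)) : AA d m →L[ℂ] AA d m :=
  LinearMap.mkContinuous
    { toFun := fun a => ⟨fun k => if k ∈ S then a k else 0, trunc_memℓp S a⟩
      map_add' := by
        intro a b
        apply lp.ext
        funext k
        show (if k ∈ S then (a + b) k else 0)
            = (if k ∈ S then a k else 0) + (if k ∈ S then b k else 0)
        rw [lp.coeFn_add]
        by_cases hk : k ∈ S <;> simp [hk]
      map_smul' := by
        intro c a
        apply lp.ext
        funext k
        show (if k ∈ S then (c • a) k else 0) = c • (if k ∈ S then a k else 0)
        rw [lp.coeFn_smul]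
        by_cases hk : k ∈ S <;> simp [hk] }
    1
    (by
      intro a
      rw [one_mul]
      refine lp.norm_le_of_forall_sum_le (by norm_num) (norm_nonneg a) fun s => ?_
      calc ∑ k ∈ s, ‖(if k ∈ S then a k else 0)‖ ^ (1 : ℝ≥0∞).toReal
          ≤ ∑ k ∈ s, ‖a k‖ ^ (1 : ℝ≥0∞).toReal := by
            refine Finset.sum_le_sum fun k _ => ?_
            simp only [ENNReal.toReal_one, Real.rpow_one]
            split <;> simp
        _ ≤ ‖a‖ ^ (1 : ℝ≥0∞).toReal := lp.sum_rpow_le_norm_rpow (by norm_num) a s)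

@[simp] lemma truncL_apply (S : Set (Fin d → ℤ)) (a : AA d m) (k : Fin d → ℤ) :
    (truncL S a : AA d m) k = if k ∈ S then a k else 0 := rfl

/-- evaluation of the `k₀`-th coefficient, as a continuous linear map -/
def evalCLM (k0 : Fin d → ℤ) : AA d m →L[ℂ] V m :=
  LinearMap.mkContinuous
    { toFun := fun a => a k0
      map_add' := fun a b => by simp [lp.coeFn_add]
      map_smul' := fun c a => by simp [lp.coeFn_smul] }
    1 (fun a => by rw [one_mul]; exact lp.norm_apply_le_norm one_ne_zero a k0)

@[simp] lemma evalCLM_apply (k0 : Fin d → ℤ) (a : AA d m) : evalCLM k0 a = a k0 := rfl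

/-- pairing with a fixed real vector, as a continuous linear map -/
def sumForm (c : Fin m → ℝ) : V m →L[ℂ] ℂ :=
  LinearMap.toContinuousLinearMap
    { toFun := fun x => ∑ i, (c i : ℂ) * x i
      map_add' := by
        intro x y
        simp [mul_add, Finset.sum_add_distrib]
      map_smul' := by
        intro t x
        simp only [Finset.mul_sum, RingHom.id_apply, smul_eq_mul]
        refine Finset.sum_congr rfl fun i _ => ?_
        simp [PiLp.smul_apply]
        ring }

@[simp] lemma sumForm_apply (c : Fin m → ℝ) (x : V m) :
    sumForm c x = ∑ i, (c i : ℂ) * x i := rfl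

end Aux

set_option maxHeartbeats 1000000 in
/-- the renormalisation operator `ℛ(X) = 𝒯(𝒰(X)) / (ω̄·𝔼(𝒯(𝒰(X))))`
is well defined and analytic on an open ball `B ⊆ B̂` centred at `ω`. -/
theorem statement4 {d : ℕ} (hd : 2 ≤ d) (κ ρ ρ' σ : ℝ)
    (hκ0 : 0 < κ) (hκ1 : κ < 1) (hρ' : 0 < ρ') (hρ : ρ' < ρ) (hκρ : κ * ρ < ρ')
    (ω : Fin d → ℝ) (hKT : KochType d ω)
    (T : Matrix (Fin d) (Fin d) ℤ) (hdet : T.det = 1 ∨ T.det = -1)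
    (lam : Fin d → ℂ)
    (hchar : (T.map ((↑) : ℤ → ℂ)).charpoly = ∏ j, (Polynomial.X - Polynomial.C (lam j)))
    (h1 : 1 < ‖lam ⟨0, by omega⟩‖)
    (hsmall : ∀ j : Fin d, j ≠ ⟨0, by omega⟩ → ‖lam j‖ < 1)
    (l1 : ℝ) (hl1 : lam ⟨0, by omega⟩ = (l1 : ℂ))
    (hev : (T.map ((↑) : ℤ → ℝ)).mulVec ω = l1 • ω)
    (ωbar : Fin d → ℝ)
    (hbar : (T.map ((↑) : ℤ → ℝ)).transpose.mulVec ωbar = l1 • ωbar)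
    (hnorm : ∑ i, ωbar i * ω i = 1)
    (hσ : 0 < σ)
    (hσcond : ∀ k : Fin d → ℤ, k ≠ 0 →
        ‖∑ i, (ω i : ℂ) * (k i : ℂ)‖ ≤ σ * nZ k →
        nZ (T.transpose.mulVec k) ≤ κ * nZ k)
    (𝒯 : ↥(SubOn d d (Iminus σ (toC ω))ᶜ) →L[ℂ] AA d d)
    (h𝒯 : ∀ (X : ↥(SubOn d d (Iminus σ (toC ω))ᶜ)) (k : Fin d → ℤ),
        coeffA' ρ (𝒯 X) (T.transpose.mulVec k)
          = (WithLp.toLp 1 ((T.map ((↑) : ℤ → ℂ))⁻¹.mulVec (coeffA ρ' (X : AA d d) k)) : V d))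
    (εhat : ℝ) (hεhat : 0 < εhat)
    (𝒰 : AA d d → ↥(SubOn d d (Iminus σ (toC ω))ᶜ))
    (hUan : AnalyticOnNhd ℂ (fun X => ((𝒰 X : AA d d)))
        (Metric.ball (const (toC ω)) εhat))
    (hUest : ∃ Cst : ℝ, ∀ f g : AA d d,
        const (toC ω) + f ∈ Metric.ball (const (toC ω) : AA d d) εhat →
        (∀ k, coeffA ρ' g k = if k ∈ Iminus σ (toC ω) then 0 else coeffA' ρ f k) →
        ‖((𝒰 (const (toC ω) + f) : AA d d)) - const (toC ω) - g‖ ≤ Cst * ‖f‖ ^ 2) :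
    ∃ ε > (0 : ℝ), ε ≤ εhat ∧
      (∀ X ∈ Metric.ball (const (toC ω) : AA d d) ε,
        (∑ i, (ωbar i : ℂ) * (𝒯 (𝒰 X)) 0 i) ≠ 0) ∧
      AnalyticOnNhd ℂ
        (fun X => (∑ i, (ωbar i : ℂ) * (𝒯 (𝒰 X)) 0 i)⁻¹ • (𝒯 (𝒰 X)))
        (Metric.ball (const (toC ω)) ε) := by
  classical
  have hl1ne : (l1 : ℂ) ≠ 0 := by
    intro h
    rw [hl1, h] at h1
    simp only [norm_zero] at h1
    exact absurd h1 (by norm_num)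
  -- 𝒰 fixes the centre
  obtain ⟨Cst, hC⟩ := hUest
  have hcenter : ((𝒰 (const (toC ω)) : AA d d)) = const (toC ω) := by
    have h0 : const (toC ω) + (0 : AA d d) ∈ Metric.ball (const (toC ω) : AA d d) εhat := by
      rw [add_zero]
      exact Metric.mem_ball_self hεhat
    have hg0 : ∀ k, coeffA ρ' (0 : AA d d) k
        = if k ∈ Iminus σ (toC ω) then 0 else coeffA' ρ (0 : AA d d) k := by
      intro k
      have e1 : coeffA ρ' (0 : AA d d) k = 0 := by
        simp [coeffA, lp.coeFn_zero]
      have e2 : coeffA' ρ (0 : AA d d) k = 0 := by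
        simp [coeffA', lp.coeFn_zero]
      rw [e1, e2]
      simp
    have hb := hC 0 0 h0 hg0
    rw [add_zero] at hb
    have hb' : ‖((𝒰 (const (toC ω)) : AA d d)) - const (toC ω)‖ ≤ 0 := by
      simpa using hb
    have := le_antisymm hb' (norm_nonneg _)
    rw [norm_eq_zero] at this
    exact sub_eq_zero.mp this
  -- matrix facts
  have hdetC : IsUnit ((T.map ((↑) : ℤ → ℂ)).det) := by
    have hmap : ((T.map ((↑) : ℤ → ℂ)).det) = ((T.det : ℤ) : ℂ) :=
      ((Int.castRingHom ℂ).map_det T).symm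
    rcases hdet with h | h <;> rw [h] at hmap <;> simp [hmap]
  have hevC : (T.map ((↑) : ℤ → ℂ)).mulVec (toC ω) = (l1 : ℂ) • toC ω := by
    funext i
    have h := congrFun hev i
    simp only [Matrix.mulVec, dotProduct, Matrix.map_apply, Pi.smul_apply,
      smul_eq_mul] at h ⊢
    have h' := congrArg (fun t : ℝ => (t : ℂ)) h
    push_cast at h'
    simpa [toC] using h'
  have hinv : (T.map ((↑) : ℤ → ℂ))⁻¹.mulVec (toC ω) = ((l1 : ℂ))⁻¹ • toC ω := by
    have h1' : (T.map ((↑) : ℤ → ℂ))⁻¹.mulVec ((T.map ((↑) : ℤ → ℂ)).mulVec (toC ω)) = toC ω := by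
      rw [Matrix.mulVec_mulVec, Matrix.nonsing_inv_mul _ hdetC, Matrix.one_mulVec]
    rw [hevC, Matrix.mulVec_smul] at h1'
    calc (T.map ((↑) : ℤ → ℂ))⁻¹.mulVec (toC ω)
        = (l1 : ℂ)⁻¹ • ((l1 : ℂ) • (T.map ((↑) : ℤ → ℂ))⁻¹.mulVec (toC ω)) := by
          rw [smul_smul, inv_mul_cancel₀ hl1ne, one_smul]
      _ = (l1 : ℂ)⁻¹ • toC ω := by rw [h1']
  -- the zeroth coefficient of 𝒯 (𝒰 centre)
  have hTv0 : ((𝒯 (𝒰 (const (toC ω)))) : AA d d) 0 = ((l1 : ℂ))⁻¹ • toC ω := by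
    have hkey := h𝒯 (𝒰 (const (toC ω))) 0
    rw [Matrix.mulVec_zero] at hkey
    have hw' : w' (d := d) ρ 0 = 1 := by simp [w', nZ]
    have hw : w (d := d) ρ' 0 = 1 := by simp [w, nZ]
    have hL : coeffA' ρ (𝒯 (𝒰 (const (toC ω)))) 0 = ((𝒯 (𝒰 (const (toC ω)))) : AA d d) 0 := by
      rw [coeffA', hw']
      simp
    have hR : coeffA ρ' ((𝒰 (const (toC ω)) : AA d d)) 0 = toC ω := by
      rw [coeffA, hw, hcenter]
      simp [const, lp.single_apply_self]
    rw [hL, hR] at hkey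
    rw [hkey, hinv]
    rfl
  -- the functional value at the centre
  have hφ0 : (∑ i, (ωbar i : ℂ) * (𝒯 (𝒰 (const (toC ω)))) 0 i) = ((l1 : ℂ))⁻¹ := by
    rw [hTv0]
    have hterm : ∀ i, (ωbar i : ℂ) * (((l1 : ℂ)⁻¹ • toC ω) i)
        = (l1 : ℂ)⁻¹ * ((ωbar i : ℂ) * (ω i : ℂ)) := by
      intro i
      simp [toC, Pi.smul_apply]
      ring
    rw [Finset.sum_congr rfl (fun i _ => hterm i), ← Finset.mul_sum]
    have hsum : (∑ i, (ωbar i : ℂ) * (ω i : ℂ)) = 1 := by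
      have h' := congrArg (fun t : ℝ => (t : ℂ)) hnorm
      push_cast at h'
      simpa using h'
    rw [hsum, mul_one]
  -- the retraction onto the subspace
  have hPmem : ∀ a : AA d d, truncL (Iminus σ (toC ω))ᶜ a ∈ SubOn d d (Iminus σ (toC ω))ᶜ := by
    intro a k hk
    simp [truncL_apply, hk]
  set ι2 : AA d d →L[ℂ] ↥(SubOn d d (Iminus σ (toC ω))ᶜ) :=
    (truncL (Iminus σ (toC ω))ᶜ).codRestrict _ hPmem with hι2def
  have hι2 : ∀ Y : ↥(SubOn d d (Iminus σ (toC ω))ᶜ), ι2 (Y : AA d d) = Y := by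
    intro Y
    apply Subtype.ext
    apply lp.ext
    funext k
    by_cases hk : k ∈ (Iminus σ (toC ω))ᶜ
    · simp [hι2def, ContinuousLinearMap.coe_codRestrict_apply, truncL_apply, hk]
    · have hz := Y.2 k hk
      simp [hι2def, ContinuousLinearMap.coe_codRestrict_apply, truncL_apply, hk, hz]
  have hgfun : (fun X : AA d d => ((𝒯 (𝒰 X) : AA d d)))
      = (𝒯.comp ι2) ∘ (fun X => ((𝒰 X : AA d d))) := by
    funext X
    simp [Function.comp, hι2]
  have gan : AnalyticOnNhd ℂ (fun X : AA d d => ((𝒯 (𝒰 X) : AA d d)))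
      (Metric.ball (const (toC ω)) εhat) := by
    rw [hgfun]
    exact (𝒯.comp ι2).comp_analyticOnNhd hUan
  have φan : AnalyticOnNhd ℂ (fun X : AA d d => ∑ i, (ωbar i : ℂ) * (𝒯 (𝒰 X)) 0 i)
      (Metric.ball (const (toC ω)) εhat) := by
    have hφfun : (fun X : AA d d => ∑ i, (ωbar i : ℂ) * (𝒯 (𝒰 X)) 0 i)
        = ((sumForm ωbar).comp (evalCLM 0)) ∘ (fun X : AA d d => ((𝒯 (𝒰 X) : AA d d))) := by
      funext X
      simp [Function.comp]
    rw [hφfun]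
    exact ((sumForm ωbar).comp (evalCLM 0)).comp_analyticOnNhd gan
  -- choose the radius
  have hφc : ContinuousAt (fun X : AA d d => ∑ i, (ωbar i : ℂ) * (𝒯 (𝒰 X)) 0 i)
      (const (toC ω)) :=
    (φan _ (Metric.mem_ball_self hεhat)).continuousAt
  have hev0 : ∀ᶠ X in nhds (const (toC ω) : AA d d),
      (∑ i, (ωbar i : ℂ) * (𝒯 (𝒰 X)) 0 i) ≠ 0 := by
    refine hφc.eventually_ne ?_
    rw [hφ0]
    exact inv_ne_zero hl1ne
  rw [Metric.eventually_nhds_iff_ball] at hev0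
  obtain ⟨δ, hδ0, hδ⟩ := hev0
  have hsub : Metric.ball (const (toC ω) : AA d d) (min δ εhat)
      ⊆ Metric.ball (const (toC ω)) εhat := Metric.ball_subset_ball (min_le_right _ _)
  have hsubδ : Metric.ball (const (toC ω) : AA d d) (min δ εhat)
      ⊆ Metric.ball (const (toC ω)) δ := Metric.ball_subset_ball (min_le_left _ _)
  refine ⟨min δ εhat, lt_min hδ0 hεhat, min_le_right _ _, ?_, ?_⟩
  · intro X hX
    exact hδ X (hsubδ hX)
  · exact ((φan.mono hsub).inv (fun X hX => hδ X (hsubδ hX))).smul (gan.mono hsub)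

end Renorm
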